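/- Let G be the graph consisting of 5 disjoint 5-cliques arranged in a cycle, where each clique has one 'exterior' vertex of degree 4 and four 'interior' vertices of degree 8, and each pair of cyclically adjacent cliques is joined by four edges such that each interior vertex has two edges to each neighboring clique (the four between-clique edges between adjacent cliques connect two pairs of interior vertices, with each interior vertex's four between-clique edges going to the two adjacent cliques). Then in any locally-optimal coloring of G, each 5-clique is monochromatic. -/
import Mathlib

/-- A locally-optimal `k`-coloring: each vertex's own color appears strictly
more often among its neighbors than any other color (plurality). -/
def IsLocOpt {V : Type*} {k : ℕ} (G : SimpleGraph V) (c : V → Fin k) : Prop :=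
  ∀ v : V, ∀ d : Fin k, d ≠ c v →
    Nat.card {w : V // G.Adj v w ∧ c w = d} < Nat.card {w : V // G.Adj v w ∧ c w = c v}

/-- The number of locally-optimal `k`-colorings of `G`. -/
noncomputable def LOcount {V : Type*} (G : SimpleGraph V) (k : ℕ) : ℕ :=
  Nat.card {c : V → Fin k // IsLocOpt G c}

/-- Five 5-cliques (indexed by `ZMod 5`, with vertex `0` of each clique the
"exterior" vertex) arranged in a cycle: between consecutive cliques `i` and
`i+1`, the interior pair `{1,2}` of one clique is completely joined to the
interior pair `{3,4}` of the other, giving every interior vertex two edges to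
each of the two neighboring cliques. -/
def G7 : SimpleGraph (ZMod 5 × Fin 5) :=
  SimpleGraph.fromRel fun x y =>
    (x.1 = y.1 ∧ x.2 ≠ y.2) ∨
    (y.1 = x.1 + 1 ∧
      ((x.2 ∈ ({1, 2} : Finset (Fin 5)) ∧ y.2 ∈ ({3, 4} : Finset (Fin 5))) ∨
       (x.2 ∈ ({3, 4} : Finset (Fin 5)) ∧ y.2 ∈ ({1, 2} : Finset (Fin 5)))))

instance : DecidableRel G7.Adj := fun x y =>
  decidable_of_iff _ (SimpleGraph.fromRel_adj _ x y).symm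

lemma nbr0 : ∀ (i : ZMod 5) (w : ZMod 5 × Fin 5),
    G7.Adj (i,0) w ↔ w ∈ ([(i,1),(i,2),(i,3),(i,4)] : List (ZMod 5 × Fin 5)) := by decide
lemma nbr1 : ∀ (i : ZMod 5) (w : ZMod 5 × Fin 5),
    G7.Adj (i,1) w ↔ w ∈ ([(i,0),(i,2),(i,3),(i,4),(i+1,3),(i+1,4),(i-1,3),(i-1,4)] : List (ZMod 5 × Fin 5)) := by decide
lemma nbr2 : ∀ (i : ZMod 5) (w : ZMod 5 × Fin 5),
    G7.Adj (i,2) w ↔ w ∈ ([(i,0),(i,1),(i,3),(i,4),(i+1,3),(i+1,4),(i-1,3),(i-1,4)] : List (ZMod 5 × Fin 5)) := by decide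
lemma nbr3 : ∀ (i : ZMod 5) (w : ZMod 5 × Fin 5),
    G7.Adj (i,3) w ↔ w ∈ ([(i,0),(i,1),(i,2),(i,4),(i+1,1),(i+1,2),(i-1,1),(i-1,2)] : List (ZMod 5 × Fin 5)) := by decide
lemma nbr4 : ∀ (i : ZMod 5) (w : ZMod 5 × Fin 5),
    G7.Adj (i,4) w ↔ w ∈ ([(i,0),(i,1),(i,2),(i,3),(i+1,1),(i+1,2),(i-1,1),(i-1,2)] : List (ZMod 5 × Fin 5)) := by decide

lemma nd0 : ∀ (i : ZMod 5), ([(i,1),(i,2),(i,3),(i,4)] : List (ZMod 5 × Fin 5)).Nodup := by decide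
lemma nd1 : ∀ (i : ZMod 5), ([(i,0),(i,2),(i,3),(i,4),(i+1,3),(i+1,4),(i-1,3),(i-1,4)] : List (ZMod 5 × Fin 5)).Nodup := by decide
lemma nd2 : ∀ (i : ZMod 5), ([(i,0),(i,1),(i,3),(i,4),(i+1,3),(i+1,4),(i-1,3),(i-1,4)] : List (ZMod 5 × Fin 5)).Nodup := by decide
lemma nd3 : ∀ (i : ZMod 5), ([(i,0),(i,1),(i,2),(i,4),(i+1,1),(i+1,2),(i-1,1),(i-1,2)] : List (ZMod 5 × Fin 5)).Nodup := by decide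
lemma nd4 : ∀ (i : ZMod 5), ([(i,0),(i,1),(i,2),(i,3),(i+1,1),(i+1,2),(i-1,1),(i-1,2)] : List (ZMod 5 × Fin 5)).Nodup := by decide

lemma count_eq {k : ℕ} (c : ZMod 5 × Fin 5 → Fin k) (v : ZMod 5 × Fin 5) (d : Fin k)
    (L : List (ZMod 5 × Fin 5)) (hL : L.Nodup) (hm : ∀ w, G7.Adj v w ↔ w ∈ L) :
    Nat.card {w // G7.Adj v w ∧ c w = d} = L.countP (fun w => decide (c w = d)) := by
  classical
  rw [Nat.card_eq_fintype_card, Fintype.card_subtype]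
  have h : Finset.univ.filter (fun w => G7.Adj v w ∧ c w = d)
      = (L.filter (fun w => decide (c w = d))).toFinset := by
    ext w
    simp [hm w, List.mem_filter]
  rw [h, List.card_toFinset, (hL.filter _).dedup, List.countP_eq_length_filter]

lemma loc_ineq {k : ℕ} (c : ZMod 5 × Fin 5 → Fin k) (hc : IsLocOpt G7 c)
    (v : ZMod 5 × Fin 5) (d : Fin k) (hd : d ≠ c v)
    (L : List (ZMod 5 × Fin 5)) (hL : L.Nodup) (hm : ∀ w, G7.Adj v w ↔ w ∈ L) :
    L.countP (fun w => decide (c w = d)) < L.countP (fun w => decide (c w = c v)) := by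
  have h := hc v d hd
  rwa [count_eq c v d L hL hm, count_eq c v (c v) L hL hm] at h

lemma pair_le {k : ℕ} (a d x : Fin k) (h : d ≠ x) :
    (if a = d then (1:ℕ) else 0) + (if a = x then (1:ℕ) else 0) ≤ 1 := by
  by_cases h1 : a = d <;> by_cases h2 : a = x
  · exact absurd (h1.symm.trans h2) h
  · rw [if_pos h1, if_neg h2]
  · rw [if_neg h1, if_pos h2]
  · rw [if_neg h1, if_neg h2]; omega

section Core
variable {k : ℕ} (c : ZMod 5 × Fin 5 → Fin k) (i : ZMod 5)

lemma core1 (hc : IsLocOpt G7 c) (hd : c (i,1) ≠ c (i,0)) :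
    c (i+1,3) = c (i,1) ∧ c (i+1,4) = c (i,1) ∧ c (i-1,3) = c (i,1) ∧ c (i-1,4) = c (i,1) ∧
    c (i,2) ≠ c (i,1) ∧ c (i,3) ≠ c (i,1) ∧ c (i,4) ≠ c (i,1) ∧
    (c (i,2) = c (i,0) → c (i,3) = c (i,0) → c (i,4) = c (i,0) → False) := by
  have h1 := loc_ineq c hc (i,0) (c (i,1)) hd _ (nd0 i) (nbr0 i)
  have h2 := loc_ineq c hc (i,1) (c (i,0)) (Ne.symm hd) _ (nd1 i) (nbr1 i)
  simp only [List.countP_cons, List.countP_nil, decide_eq_true_eq] at h1 h2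
  have sT : (if True then (1:ℕ) else 0) = 1 := if_pos trivial
  have sB : (if c (i,1) = c (i,0) then (1:ℕ) else 0) = 0 := if_neg hd
  have sD : (if c (i,0) = c (i,1) then (1:ℕ) else 0) = 0 := if_neg (Ne.symm hd)
  have p2 := pair_le (c (i,2)) (c (i,1)) (c (i,0)) hd
  have p3 := pair_le (c (i,3)) (c (i,1)) (c (i,0)) hd
  have p4 := pair_le (c (i,4)) (c (i,1)) (c (i,0)) hd
  have q1 := pair_le (c (i+1,3)) (c (i,1)) (c (i,0)) hd
  have q2 := pair_le (c (i+1,4)) (c (i,1)) (c (i,0)) hd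
  have q3 := pair_le (c (i-1,3)) (c (i,1)) (c (i,0)) hd
  have q4 := pair_le (c (i-1,4)) (c (i,1)) (c (i,0)) hd
  refine ⟨?_, ?_, ?_, ?_, ?_, ?_, ?_, ?_⟩
  · by_contra hne
    have hz : (if c (i+1,3) = c (i,1) then (1:ℕ) else 0) = 0 := if_neg hne
    omega
  · by_contra hne
    have hz : (if c (i+1,4) = c (i,1) then (1:ℕ) else 0) = 0 := if_neg hne
    omega
  · by_contra hne
    have hz : (if c (i-1,3) = c (i,1) then (1:ℕ) else 0) = 0 := if_neg hne
    omega
  · by_contra hne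
    have hz : (if c (i-1,4) = c (i,1) then (1:ℕ) else 0) = 0 := if_neg hne
    omega
  · intro h
    have hz : (if c (i,2) = c (i,1) then (1:ℕ) else 0) = 1 := if_pos h
    omega
  · intro h
    have hz : (if c (i,3) = c (i,1) then (1:ℕ) else 0) = 1 := if_pos h
    omega
  · intro h
    have hz : (if c (i,4) = c (i,1) then (1:ℕ) else 0) = 1 := if_pos h
    omega
  · intro hA hB hC
    have zA : (if c (i,2) = c (i,0) then (1:ℕ) else 0) = 1 := if_pos hA
    have zB : (if c (i,3) = c (i,0) then (1:ℕ) else 0) = 1 := if_pos hB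
    have zC : (if c (i,4) = c (i,0) then (1:ℕ) else 0) = 1 := if_pos hC
    omega

lemma core2 (hc : IsLocOpt G7 c) (hd : c (i,2) ≠ c (i,0)) :
    c (i+1,3) = c (i,2) ∧ c (i+1,4) = c (i,2) ∧ c (i-1,3) = c (i,2) ∧ c (i-1,4) = c (i,2) ∧
    c (i,1) ≠ c (i,2) ∧ c (i,3) ≠ c (i,2) ∧ c (i,4) ≠ c (i,2) ∧
    (c (i,1) = c (i,0) → c (i,3) = c (i,0) → c (i,4) = c (i,0) → False) := by
  have h1 := loc_ineq c hc (i,0) (c (i,2)) hd _ (nd0 i) (nbr0 i)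
  have h2 := loc_ineq c hc (i,2) (c (i,0)) (Ne.symm hd) _ (nd2 i) (nbr2 i)
  simp only [List.countP_cons, List.countP_nil, decide_eq_true_eq] at h1 h2
  have sT : (if True then (1:ℕ) else 0) = 1 := if_pos trivial
  have sB : (if c (i,2) = c (i,0) then (1:ℕ) else 0) = 0 := if_neg hd
  have sD : (if c (i,0) = c (i,2) then (1:ℕ) else 0) = 0 := if_neg (Ne.symm hd)
  have p2 := pair_le (c (i,1)) (c (i,2)) (c (i,0)) hd
  have p3 := pair_le (c (i,3)) (c (i,2)) (c (i,0)) hd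
  have p4 := pair_le (c (i,4)) (c (i,2)) (c (i,0)) hd
  have q1 := pair_le (c (i+1,3)) (c (i,2)) (c (i,0)) hd
  have q2 := pair_le (c (i+1,4)) (c (i,2)) (c (i,0)) hd
  have q3 := pair_le (c (i-1,3)) (c (i,2)) (c (i,0)) hd
  have q4 := pair_le (c (i-1,4)) (c (i,2)) (c (i,0)) hd
  refine ⟨?_, ?_, ?_, ?_, ?_, ?_, ?_, ?_⟩
  · by_contra hne
    have hz : (if c (i+1,3) = c (i,2) then (1:ℕ) else 0) = 0 := if_neg hne
    omega
  · by_contra hne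
    have hz : (if c (i+1,4) = c (i,2) then (1:ℕ) else 0) = 0 := if_neg hne
    omega
  · by_contra hne
    have hz : (if c (i-1,3) = c (i,2) then (1:ℕ) else 0) = 0 := if_neg hne
    omega
  · by_contra hne
    have hz : (if c (i-1,4) = c (i,2) then (1:ℕ) else 0) = 0 := if_neg hne
    omega
  · intro h
    have hz : (if c (i,1) = c (i,2) then (1:ℕ) else 0) = 1 := if_pos h
    omega
  · intro h
    have hz : (if c (i,3) = c (i,2) then (1:ℕ) else 0) = 1 := if_pos h
    omega
  · intro h
    have hz : (if c (i,4) = c (i,2) then (1:ℕ) else 0) = 1 := if_pos h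
    omega
  · intro hA hB hC
    have zA : (if c (i,1) = c (i,0) then (1:ℕ) else 0) = 1 := if_pos hA
    have zB : (if c (i,3) = c (i,0) then (1:ℕ) else 0) = 1 := if_pos hB
    have zC : (if c (i,4) = c (i,0) then (1:ℕ) else 0) = 1 := if_pos hC
    omega

lemma core3 (hc : IsLocOpt G7 c) (hd : c (i,3) ≠ c (i,0)) :
    c (i+1,1) = c (i,3) ∧ c (i+1,2) = c (i,3) ∧ c (i-1,1) = c (i,3) ∧ c (i-1,2) = c (i,3) ∧
    c (i,1) ≠ c (i,3) ∧ c (i,2) ≠ c (i,3) ∧ c (i,4) ≠ c (i,3) ∧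
    (c (i,1) = c (i,0) → c (i,2) = c (i,0) → c (i,4) = c (i,0) → False) := by
  have h1 := loc_ineq c hc (i,0) (c (i,3)) hd _ (nd0 i) (nbr0 i)
  have h2 := loc_ineq c hc (i,3) (c (i,0)) (Ne.symm hd) _ (nd3 i) (nbr3 i)
  simp only [List.countP_cons, List.countP_nil, decide_eq_true_eq] at h1 h2
  have sT : (if True then (1:ℕ) else 0) = 1 := if_pos trivial
  have sB : (if c (i,3) = c (i,0) then (1:ℕ) else 0) = 0 := if_neg hd
  have sD : (if c (i,0) = c (i,3) then (1:ℕ) else 0) = 0 := if_neg (Ne.symm hd)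
  have p2 := pair_le (c (i,1)) (c (i,3)) (c (i,0)) hd
  have p3 := pair_le (c (i,2)) (c (i,3)) (c (i,0)) hd
  have p4 := pair_le (c (i,4)) (c (i,3)) (c (i,0)) hd
  have q1 := pair_le (c (i+1,1)) (c (i,3)) (c (i,0)) hd
  have q2 := pair_le (c (i+1,2)) (c (i,3)) (c (i,0)) hd
  have q3 := pair_le (c (i-1,1)) (c (i,3)) (c (i,0)) hd
  have q4 := pair_le (c (i-1,2)) (c (i,3)) (c (i,0)) hd
  refine ⟨?_, ?_, ?_, ?_, ?_, ?_, ?_, ?_⟩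
  · by_contra hne
    have hz : (if c (i+1,1) = c (i,3) then (1:ℕ) else 0) = 0 := if_neg hne
    omega
  · by_contra hne
    have hz : (if c (i+1,2) = c (i,3) then (1:ℕ) else 0) = 0 := if_neg hne
    omega
  · by_contra hne
    have hz : (if c (i-1,1) = c (i,3) then (1:ℕ) else 0) = 0 := if_neg hne
    omega
  · by_contra hne
    have hz : (if c (i-1,2) = c (i,3) then (1:ℕ) else 0) = 0 := if_neg hne
    omega
  · intro h
    have hz : (if c (i,1) = c (i,3) then (1:ℕ) else 0) = 1 := if_pos h
    omega
  · intro h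
    have hz : (if c (i,2) = c (i,3) then (1:ℕ) else 0) = 1 := if_pos h
    omega
  · intro h
    have hz : (if c (i,4) = c (i,3) then (1:ℕ) else 0) = 1 := if_pos h
    omega
  · intro hA hB hC
    have zA : (if c (i,1) = c (i,0) then (1:ℕ) else 0) = 1 := if_pos hA
    have zB : (if c (i,2) = c (i,0) then (1:ℕ) else 0) = 1 := if_pos hB
    have zC : (if c (i,4) = c (i,0) then (1:ℕ) else 0) = 1 := if_pos hC
    omega

lemma core4 (hc : IsLocOpt G7 c) (hd : c (i,4) ≠ c (i,0)) :
    c (i+1,1) = c (i,4) ∧ c (i+1,2) = c (i,4) ∧ c (i-1,1) = c (i,4) ∧ c (i-1,2) = c (i,4) ∧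
    c (i,1) ≠ c (i,4) ∧ c (i,2) ≠ c (i,4) ∧ c (i,3) ≠ c (i,4) ∧
    (c (i,1) = c (i,0) → c (i,2) = c (i,0) → c (i,3) = c (i,0) → False) := by
  have h1 := loc_ineq c hc (i,0) (c (i,4)) hd _ (nd0 i) (nbr0 i)
  have h2 := loc_ineq c hc (i,4) (c (i,0)) (Ne.symm hd) _ (nd4 i) (nbr4 i)
  simp only [List.countP_cons, List.countP_nil, decide_eq_true_eq] at h1 h2
  have sT : (if True then (1:ℕ) else 0) = 1 := if_pos trivial
  have sB : (if c (i,4) = c (i,0) then (1:ℕ) else 0) = 0 := if_neg hd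
  have sD : (if c (i,0) = c (i,4) then (1:ℕ) else 0) = 0 := if_neg (Ne.symm hd)
  have p2 := pair_le (c (i,1)) (c (i,4)) (c (i,0)) hd
  have p3 := pair_le (c (i,2)) (c (i,4)) (c (i,0)) hd
  have p4 := pair_le (c (i,3)) (c (i,4)) (c (i,0)) hd
  have q1 := pair_le (c (i+1,1)) (c (i,4)) (c (i,0)) hd
  have q2 := pair_le (c (i+1,2)) (c (i,4)) (c (i,0)) hd
  have q3 := pair_le (c (i-1,1)) (c (i,4)) (c (i,0)) hd
  have q4 := pair_le (c (i-1,2)) (c (i,4)) (c (i,0)) hd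
  refine ⟨?_, ?_, ?_, ?_, ?_, ?_, ?_, ?_⟩
  · by_contra hne
    have hz : (if c (i+1,1) = c (i,4) then (1:ℕ) else 0) = 0 := if_neg hne
    omega
  · by_contra hne
    have hz : (if c (i+1,2) = c (i,4) then (1:ℕ) else 0) = 0 := if_neg hne
    omega
  · by_contra hne
    have hz : (if c (i-1,1) = c (i,4) then (1:ℕ) else 0) = 0 := if_neg hne
    omega
  · by_contra hne
    have hz : (if c (i-1,2) = c (i,4) then (1:ℕ) else 0) = 0 := if_neg hne
    omega
  · intro h
    have hz : (if c (i,1) = c (i,4) then (1:ℕ) else 0) = 1 := if_pos h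
    omega
  · intro h
    have hz : (if c (i,2) = c (i,4) then (1:ℕ) else 0) = 1 := if_pos h
    omega
  · intro h
    have hz : (if c (i,3) = c (i,4) then (1:ℕ) else 0) = 1 := if_pos h
    omega
  · intro hA hB hC
    have zA : (if c (i,1) = c (i,0) then (1:ℕ) else 0) = 1 := if_pos hA
    have zB : (if c (i,2) = c (i,0) then (1:ℕ) else 0) = 1 := if_pos hB
    have zC : (if c (i,3) = c (i,0) then (1:ℕ) else 0) = 1 := if_pos hC
    omega

/-- If in some clique the interiors are colored `q,q,d,d` (positions 1,2 get `q`,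
positions 3,4 get `d`) with `q ≠ d`, we get a contradiction from the exterior. -/
lemma nextc (hc : IsLocOpt G7 c) (e2 : c (i,2) = c (i,1)) (e4 : c (i,4) = c (i,3))
    (hne : c (i,1) ≠ c (i,3)) : False := by
  by_cases hx : c (i,3) = c (i,0)
  · have hq : c (i,1) ≠ c (i,0) := fun h => hne (h.trans hx.symm)
    have h1 := loc_ineq c hc (i,0) (c (i,1)) hq _ (nd0 i) (nbr0 i)
    simp only [List.countP_cons, List.countP_nil, decide_eq_true_eq] at h1
    have sT : (if True then (1:ℕ) else 0) = 1 := if_pos trivial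
    have sB : (if c (i,1) = c (i,0) then (1:ℕ) else 0) = 0 := if_neg hq
    have s2 : (if c (i,2) = c (i,1) then (1:ℕ) else 0) = 1 := if_pos e2
    have s2' : (if c (i,2) = c (i,0) then (1:ℕ) else 0) = 0 :=
      if_neg (fun h => hq (e2.symm.trans h))
    have s3 : (if c (i,3) = c (i,1) then (1:ℕ) else 0) = 0 :=
      if_neg (fun h => hne h.symm)
    have s3' : (if c (i,3) = c (i,0) then (1:ℕ) else 0) = 1 := if_pos hx
    have s4 : (if c (i,4) = c (i,1) then (1:ℕ) else 0) = 0 :=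
      if_neg (fun h => hne (e4.symm.trans h).symm)
    have s4' : (if c (i,4) = c (i,0) then (1:ℕ) else 0) = 1 := if_pos (e4.trans hx)
    omega
  · have h1 := loc_ineq c hc (i,0) (c (i,3)) hx _ (nd0 i) (nbr0 i)
    simp only [List.countP_cons, List.countP_nil, decide_eq_true_eq] at h1
    have sT : (if True then (1:ℕ) else 0) = 1 := if_pos trivial
    have s3' : (if c (i,3) = c (i,0) then (1:ℕ) else 0) = 0 := if_neg hx
    have s4 : (if c (i,4) = c (i,3) then (1:ℕ) else 0) = 1 := if_pos e4
    have s4' : (if c (i,4) = c (i,0) then (1:ℕ) else 0) = 0 :=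
      if_neg (fun h => hx (e4.symm.trans h))
    have s1 : (if c (i,1) = c (i,3) then (1:ℕ) else 0) = 0 := if_neg hne
    have s2 : (if c (i,2) = c (i,3) then (1:ℕ) else 0) = 0 :=
      if_neg (fun h => hne (e2.symm.trans h))
    have p1 := pair_le (c (i,1)) (c (i,3)) (c (i,0)) hx
    have p2 := pair_le (c (i,2)) (c (i,3)) (c (i,0)) hx
    omega

end Core

/-- In any locally-optimal coloring of the graph `G7`, each 5-clique is
monochromatic. -/
theorem stmt15 (k : ℕ) (c : ZMod 5 × Fin 5 → Fin k) (hc : IsLocOpt G7 c) :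
    ∀ i : ZMod 5, ∀ j j' : Fin 5, c (i, j) = c (i, j') := by
  have key : ∀ (i : ZMod 5) (j : Fin 5), c (i, j) = c (i, 0) := by
    intro i j
    fin_cases j
    · rfl
    · -- position 1
      by_contra hd
      obtain ⟨f1, f2, f3, f4, g2, g3, g4, nax⟩ := core1 c i hc hd
      by_cases h2x : c (i,2) = c (i,0)
      · by_cases h3x : c (i,3) = c (i,0)
        · by_cases h4x : c (i,4) = c (i,0)
          · exact nax h2x h3x h4x
          · obtain ⟨k1, k2, _, _, m1, _, _, _⟩ := core4 c i hc h4x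
            exact nextc c (i+1) hc (k2.trans k1.symm) (f2.trans f1.symm)
              (by rw [k1, f1]; exact fun h => m1 h.symm)
        · obtain ⟨k1, k2, _, _, m1, _, _, _⟩ := core3 c i hc h3x
          exact nextc c (i+1) hc (k2.trans k1.symm) (f2.trans f1.symm)
            (by rw [k1, f1]; exact fun h => m1 h.symm)
      · obtain ⟨k1, _, _, _, m1, _, _, _⟩ := core2 c i hc h2x
        exact m1 (f1.symm.trans k1)
    · -- position 2
      by_contra hd
      obtain ⟨f1, f2, f3, f4, g1, g3, g4, nax⟩ := core2 c i hc hd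
      by_cases h1x : c (i,1) = c (i,0)
      · by_cases h3x : c (i,3) = c (i,0)
        · by_cases h4x : c (i,4) = c (i,0)
          · exact nax h1x h3x h4x
          · obtain ⟨k1, k2, _, _, _, m2, _, _⟩ := core4 c i hc h4x
            exact nextc c (i+1) hc (k2.trans k1.symm) (f2.trans f1.symm)
              (by rw [k1, f1]; exact fun h => m2 h.symm)
        · obtain ⟨k1, k2, _, _, _, m2, _, _⟩ := core3 c i hc h3x
          exact nextc c (i+1) hc (k2.trans k1.symm) (f2.trans f1.symm)
            (by rw [k1, f1]; exact fun h => m2 h.symm)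
      · obtain ⟨k1, _, _, _, _, _, _, _⟩ := core1 c i hc h1x
        exact g1 (f1.symm.trans k1).symm
    · -- position 3
      by_contra hd
      obtain ⟨f1, f2, f3, f4, g1, g2, g4, nax⟩ := core3 c i hc hd
      by_cases h4x : c (i,4) = c (i,0)
      · by_cases h1x : c (i,1) = c (i,0)
        · by_cases h2x : c (i,2) = c (i,0)
          · exact nax h1x h2x h4x
          · obtain ⟨k1, k2, _, _, _, _, _, _⟩ := core2 c i hc h2x
            exact nextc c (i+1) hc (f2.trans f1.symm) (k2.trans k1.symm)
              (by rw [f1, k1]; exact fun h => g2 h.symm)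
        · obtain ⟨k1, k2, _, _, _, _, _, _⟩ := core1 c i hc h1x
          exact nextc c (i+1) hc (f2.trans f1.symm) (k2.trans k1.symm)
            (by rw [f1, k1]; exact fun h => g1 h.symm)
      · obtain ⟨k1, _, _, _, _, _, m3, _⟩ := core4 c i hc h4x
        exact g4 (k1.symm.trans f1)
    · -- position 4
      by_contra hd
      obtain ⟨f1, f2, f3, f4, g1, g2, g3, nax⟩ := core4 c i hc hd
      by_cases h3x : c (i,3) = c (i,0)
      · by_cases h1x : c (i,1) = c (i,0)
        · by_cases h2x : c (i,2) = c (i,0)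
          · exact nax h1x h2x h3x
          · obtain ⟨k1, k2, _, _, _, _, _, _⟩ := core2 c i hc h2x
            exact nextc c (i+1) hc (f2.trans f1.symm) (k2.trans k1.symm)
              (by rw [f1, k1]; exact fun h => g2 h.symm)
        · obtain ⟨k1, k2, _, _, _, _, _, _⟩ := core1 c i hc h1x
          exact nextc c (i+1) hc (f2.trans f1.symm) (k2.trans k1.symm)
            (by rw [f1, k1]; exact fun h => g1 h.symm)
      · obtain ⟨k1, _, _, _, _, _, _, _⟩ := core3 c i hc h3x
        exact g3 (k1.symm.trans f1)
  intro i j j'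
  rw [key i j, key i j']
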